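/- arXiv:1903.09315 — 5 statements merged into one kernel-verified Lean document; each statement's English description precedes it below -/
import Mathlib

section
/- In the masking protocol, if each agent i with input s_i ∈ [0, 1/n) computes effective input s̃_i = frac(s_i + a_i) where the masks satisfy frac(Σ_i a_i) = 0 and a_i ∈ [0,1), then frac(Σ_{i=1}^n s̃_i) = Σ_{i=1}^n s_i. -/
theorem fract_sum_effective_inputs (n : ℕ) (hn : 1 ≤ n)
    (s a stilde : Fin n → ℝ)
    (hs : ∀ i, s i ∈ Set.Ico (0 : ℝ) (1 / n))
    (ha : ∀ i, a i ∈ Set.Ico (0 : ℝ) 1)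
    (hafrac : Int.fract (∑ i, a i) = 0)
    (hst : ∀ i, stilde i = Int.fract (s i + a i)) :
    Int.fract (∑ i, stilde i) = ∑ i, s i := by
  have hnpos : (0 : ℝ) < n := by exact_mod_cast Nat.lt_of_lt_of_le Nat.zero_lt_one hn
  have hsum : ∑ i, stilde i
      = (∑ i, s i) + (((⌊∑ i, a i⌋ : ℤ) : ℝ) + ((-(∑ i, ⌊s i + a i⌋) : ℤ) : ℝ)) := by
    have hak : ((⌊∑ i, a i⌋ : ℤ) : ℝ) = ∑ i, a i := by
      have h := Int.fract (∑ i, a i)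
      have : Int.fract (∑ i, a i) = (∑ i, a i) - ⌊∑ i, a i⌋ := rfl
      rw [this] at hafrac; linarith
    rw [hak]
    simp only [hst, Int.fract]
    rw [Finset.sum_sub_distrib, Finset.sum_add_distrib]
    push_cast
    ring
  have hlt : ∑ i, s i < 1 := by
    calc ∑ i, s i < ∑ _i : Fin n, (1 / n : ℝ) := by
          refine Finset.sum_lt_sum_of_nonempty ?_ fun i _ => (hs i).2
          exact Finset.univ_nonempty_iff.mpr (Fin.pos_iff_nonempty.mp hn)
      _ = 1 := by
          rw [Finset.sum_const, Finset.card_univ, Fintype.card_fin, nsmul_eq_mul]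
          field_simp
  have hnn : 0 ≤ ∑ i, s i := Finset.sum_nonneg fun i _ => (hs i).1
  rw [hsum, ← Int.cast_add, Int.fract_add_intCast]
  exact Int.fract_eq_self.2 ⟨hnn, hlt⟩
end

section
/- Let G be a connected finite simple graph on n ≥ 1 nodes with oriented incidence matrix ∇, and let b = (b_e)_{e ∈ E} be i.i.d. uniform random variables on [0,1). Then the random vector a = frac(∇ · b) (fractional part taken coordinatewise) is uniformly distributed on the set {a ∈ [0,1)ⁿ : frac(Σ_i a_i) = 0}. -/
open MeasureTheory ProbabilityTheory

/-- The edge set of a simple graph `G`, as ordered pairs `(i, j)` with `i < j`. -/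
abbrev OrientedEdges {V : Type*} [LinearOrder V] (G : SimpleGraph V) : Type _ :=
  {p : V × V // p.1 < p.2 ∧ G.Adj p.1 p.2}

/-- The oriented incidence matrix of a simple graph. -/
def incidenceMatrix {V : Type*} [LinearOrder V] (G : SimpleGraph V) :
    Matrix V (OrientedEdges G) ℝ :=
  fun i e => if i = e.val.1 then 1 else if i = e.val.2 then -1 else 0

section Aux

variable {V : Type*} [Fintype V] [LinearOrder V] (G : SimpleGraph V) [DecidableRel G.Adj]

lemma incidence_colsum (e : OrientedEdges G) : ∑ i, incidenceMatrix G i e = 0 := by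
  have hne : e.val.1 ≠ e.val.2 := ne_of_lt e.prop.1
  have h : ∀ i, incidenceMatrix G i e =
      (if i = e.val.1 then (1:ℝ) else 0) + (if i = e.val.2 then (-1:ℝ) else 0) := by
    intro i
    unfold incidenceMatrix
    split_ifs with h1 h2 <;> simp_all
  rw [Finset.sum_congr rfl fun i _ => h i, Finset.sum_add_distrib]
  simp

lemma single_sub_single_mem (u v : V) (huv : G.Adj u v) :
    (Pi.single u 1 - Pi.single v 1 : V → ℝ) ∈
      LinearMap.range (Matrix.mulVecLin (incidenceMatrix G)) := by
  have key : ∀ a b : V, a < b → G.Adj a b →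
      (Pi.single a 1 - Pi.single b 1 : V → ℝ) ∈
        LinearMap.range (Matrix.mulVecLin (incidenceMatrix G)) := by
    intro a b hab hadj
    refine ⟨Pi.single (⟨(a, b), hab, hadj⟩ : OrientedEdges G) 1, ?_⟩
    rw [Matrix.mulVecLin_apply, Matrix.mulVec_single_one]
    funext i
    simp only [Pi.sub_apply, Pi.single_apply]
    show incidenceMatrix G i _ = _
    unfold incidenceMatrix
    have : a ≠ b := ne_of_lt hab
    dsimp only
    split_ifs <;> simp_all
  rcases lt_trichotomy u v with h | h | h
  · exact key u v h huv
  · exact absurd h (G.ne_of_adj huv)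
  · have := Submodule.neg_mem _ (key v u h huv.symm)
    simpa using this

lemma single_sub_single_mem_of_walk {u v : V} (w : G.Walk u v) :
    (Pi.single u 1 - Pi.single v 1 : V → ℝ) ∈
      LinearMap.range (Matrix.mulVecLin (incidenceMatrix G)) := by
  induction w with
  | nil => simpa using Submodule.zero_mem _
  | @cons a b c hadj p ih =>
      have : (Pi.single a 1 - Pi.single c 1 : V → ℝ) =
          (Pi.single a 1 - Pi.single b 1) + (Pi.single b 1 - Pi.single c 1) := by ring
      rw [this]
      exact Submodule.add_mem _ (single_sub_single_mem G a b hadj) ih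

lemma exists_preimage (hG : G.Connected) (x : V → ℝ) (hx : ∑ i, x i = 0) :
    ∃ b : OrientedEdges G → ℝ, ∀ i, ∑ e, incidenceMatrix G i e * b e = x i := by
  have hV : Nonempty V := hG.nonempty
  obtain ⟨i0⟩ := hV
  have hxmem : x ∈ LinearMap.range (Matrix.mulVecLin (incidenceMatrix G)) := by
    have hrepr : x = ∑ u, x u • (Pi.single u 1 - Pi.single i0 1 : V → ℝ) := by
      funext i
      rw [Finset.sum_apply]
      have : ∀ u, (x u • (Pi.single u 1 - Pi.single i0 1 : V → ℝ)) i
          = x u * (if i = u then 1 else 0) - x u * (if i = i0 then 1 else 0) := by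
        intro u
        simp [Pi.single_apply, mul_sub]
      rw [Finset.sum_congr rfl fun u _ => this u, Finset.sum_sub_distrib]
      rcases eq_or_ne i i0 with h | h
      · simp [h, ← Finset.sum_mul, hx]
      · simp [h]
    rw [hrepr]
    refine Submodule.sum_mem _ fun u _ => Submodule.smul_mem _ _ ?_
    exact single_sub_single_mem_of_walk G ((hG.preconnected u i0).some)
  obtain ⟨b, hb⟩ := hxmem
  refine ⟨b, fun i => ?_⟩
  have := congrFun hb i
  rw [Matrix.mulVecLin_apply] at this
  simpa [Matrix.mulVec, dotProduct] using this

end Aux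

/-- If `G` is connected and the edge values `b_e` are i.i.d. uniform on `[0,1)`, then
`a = frac(∇ ⬝ b)` is uniformly distributed on `{a ∈ [0,1)ⁿ : frac (∑ i, a i) = 0}`:
viewing `a` as a point of the torus `(ℝ/ℤ)ⁿ`, its law is supported on the subgroup
`H = {a : ∑ i, a i = 0}` and is invariant under translation by every element of `H`,
i.e. it is the Haar (uniform) probability measure of `H`. -/
theorem mask_uniform_on_zero_sum_subgroup
    {V : Type*} [Fintype V] [LinearOrder V]
    (G : SimpleGraph V) [DecidableRel G.Adj] (hG : G.Connected)
    {Ω : Type*} [MeasureSpace Ω] [IsProbabilityMeasure (ℙ : Measure Ω)]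
    (B : Ω → OrientedEdges G → ℝ)
    (hBmeas : ∀ e, Measurable fun ω => B ω e)
    (hBindep : iIndepFun (fun e ω => B ω e) ℙ)
    (hBunif : ∀ e, Measure.map (fun ω => B ω e) ℙ = volume.restrict (Set.Ico (0:ℝ) 1))
    (A : Ω → V → AddCircle (1 : ℝ))
    (hA : ∀ ω i, A ω i = ((∑ e, incidenceMatrix G i e * B ω e : ℝ) : AddCircle (1 : ℝ))) :
    (Measure.map A ℙ) {a : V → AddCircle (1 : ℝ) | ∑ i, a i = 0} = 1 ∧
    ∀ h : V → AddCircle (1 : ℝ), (∑ i, h i = 0) →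
      Measure.map (fun a => a + h) (Measure.map A ℙ) = Measure.map A ℙ := by
  haveI : Fact ((0:ℝ) < 1) := ⟨one_pos⟩
  -- the projection as an `AddMonoidHom`
  set mk : ℝ →+ AddCircle (1:ℝ) :=
    (QuotientAddGroup.mk' (AddSubgroup.zmultiples (1:ℝ))) with hmk
  have hmk_apply : ∀ r : ℝ, mk r = (r : AddCircle (1:ℝ)) := fun r => rfl
  -- integer incidence matrix
  set Z : V → OrientedEdges G → ℤ :=
    fun i e => if i = e.val.1 then 1 else if i = e.val.2 then -1 else 0 with hZ
  have hZcast : ∀ i e, ((Z i e : ℤ) : ℝ) = incidenceMatrix G i e := by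
    intro i e
    unfold incidenceMatrix
    rw [hZ]
    dsimp only
    rw [apply_ite ((↑) : ℤ → ℝ), apply_ite ((↑) : ℤ → ℝ)]
    norm_num
  -- the induced torus homomorphism
  set φ : (OrientedEdges G → AddCircle (1:ℝ)) → (V → AddCircle (1:ℝ)) :=
    fun t i => ∑ e, Z i e • t e with hφ
  have hφadd : ∀ t c, φ (t + c) = φ t + φ c := by
    intro t c
    funext i
    simp only [hφ, Pi.add_apply, smul_add, Finset.sum_add_distrib]
  have hφmeas : Measurable φ := by
    refine measurable_pi_lambda _ fun i => Finset.measurable_sum _ fun e _ => ?_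
    exact (continuous_zsmul (Z i e)).measurable.comp (measurable_pi_apply e)
  -- the projected edge variables
  set T : Ω → OrientedEdges G → AddCircle (1:ℝ) :=
    fun ω e => (B ω e : AddCircle (1:ℝ)) with hT
  have hTmeas : Measurable T :=
    measurable_pi_lambda _ fun e => AddCircle.measurable_mk'.comp (hBmeas e)
  have hAφ : A = φ ∘ T := by
    funext ω
    funext i
    rw [hA ω i, Function.comp_apply]
    calc ((∑ e, incidenceMatrix G i e * B ω e : ℝ) : AddCircle (1:ℝ))
        = mk (∑ e, (Z i e : ℝ) * B ω e) := by
          rw [hmk_apply]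
          congr 1
          exact Finset.sum_congr rfl fun e _ => by rw [hZcast]
      _ = ∑ e, Z i e • (B ω e : AddCircle (1:ℝ)) := by
          rw [map_sum]
          refine Finset.sum_congr rfl fun e _ => ?_
          rw [← zsmul_eq_mul, map_zsmul, hmk_apply]
      _ = φ (T ω) i := rfl
  have hAmeas : Measurable A := by rw [hAφ]; exact hφmeas.comp hTmeas
  -- Part 1: supported on the zero-sum subgroup
  have hsum_zero : ∀ ω, ∑ i, A ω i = 0 := by
    intro ω
    have : ∑ i, A ω i = mk (∑ i, ∑ e, incidenceMatrix G i e * B ω e) := by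
      rw [map_sum]
      exact Finset.sum_congr rfl fun i _ => by rw [hA ω i, hmk_apply]
    rw [this, Finset.sum_comm]
    have : ∑ e, ∑ i, incidenceMatrix G i e * B ω e = 0 := by
      refine Finset.sum_eq_zero fun e _ => ?_
      rw [← Finset.sum_mul, incidence_colsum, zero_mul]
    rw [this, map_zero]
  have hset_meas : MeasurableSet {a : V → AddCircle (1:ℝ) | ∑ i, a i = 0} := by
    have hcont : Continuous fun a : V → AddCircle (1:ℝ) => ∑ i, a i :=
      continuous_finset_sum _ fun i _ => continuous_apply i
    exact (isClosed_eq hcont continuous_const).measurableSet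
  constructor
  · rw [Measure.map_apply hAmeas hset_meas]
    have : A ⁻¹' {a : V → AddCircle (1:ℝ) | ∑ i, a i = 0} = Set.univ := by
      ext ω; simp [hsum_zero ω]
    rw [this, measure_univ]
  -- Part 2: invariance
  · -- the law of T is the Haar measure of the torus
    have hTlaw : Measure.map T ℙ = Measure.pi (fun _ : OrientedEdges G => volume) := by
      symm
      refine Measure.pi_eq fun s hs => ?_
      rw [Measure.map_apply hTmeas (MeasurableSet.univ_pi hs)]
      have hpre : T ⁻¹' Set.univ.pi s = ⋂ e ∈ Finset.univ, (fun ω => T ω e) ⁻¹' s e := by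
        ext ω; simp [Set.mem_pi]
      rw [hpre]
      have hind : iIndepFun (fun e ω => T ω e) ℙ :=
        hBindep.comp (fun _ => ((↑) : ℝ → AddCircle (1:ℝ))) fun _ => AddCircle.measurable_mk'
      rw [hind.measure_inter_preimage_eq_mul Finset.univ fun e _ => hs e]
      refine Finset.prod_congr rfl fun e _ => ?_
      have hTe : Measure.map (fun ω => T ω e) ℙ = volume := by
        have : (fun ω => T ω e) = ((↑) : ℝ → AddCircle (1:ℝ)) ∘ (fun ω => B ω e) := rfl
        rw [this, ← Measure.map_map AddCircle.measurable_mk' (hBmeas e), hBunif e,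
          Measure.restrict_congr_set Ico_ae_eq_Ioc]
        have := (AddCircle.measurePreserving_mk (1:ℝ) 0).map_eq
        simpa using this
      rw [← hTe]
      exact (Measure.map_apply (AddCircle.measurable_mk'.comp (hBmeas e)) (hs e)).symm
    intro h hh
    -- lift h to a zero-sum real vector
    have hexists : ∀ i, ∃ r : ℝ, (r : AddCircle (1:ℝ)) = h i := fun i =>
      Quotient.exists_rep (h i)
    choose x hx using hexists
    have hxsum : ((∑ i, x i : ℝ) : AddCircle (1:ℝ)) = 0 := by
      rw [← hmk_apply, map_sum, ← hh]
      exact Finset.sum_congr rfl fun i _ => hx i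
    obtain ⟨k, hk⟩ := (AddCircle.coe_eq_zero_iff (1:ℝ)).mp hxsum
    have hV : Nonempty V := hG.nonempty
    obtain ⟨i0⟩ := hV
    set x' : V → ℝ := Function.update x i0 (x i0 - k) with hx'
    have hx'sum : ∑ i, x' i = 0 := by
      rw [hx', Finset.sum_update_of_mem (Finset.mem_univ i0)]
      have : ∑ i ∈ Finset.univ \ {i0}, x i = (∑ i, x i) - x i0 := by
        rw [Finset.sum_sdiff_eq_sub (by simp)]
        simp
      rw [this, ← hk]
      simp [zsmul_eq_mul]
    have hintcast : ((k : ℝ) : AddCircle (1:ℝ)) = 0 := by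
      rw [AddCircle.coe_eq_zero_iff]
      exact ⟨k, by simp⟩
    have hx'cast : ∀ i, ((x' i : ℝ) : AddCircle (1:ℝ)) = h i := by
      intro i
      rcases eq_or_ne i i0 with rfl | hne
      · rw [hx']
        simp only [Function.update_self]
        have hsub : ((x i - (k:ℝ) : ℝ) : AddCircle (1:ℝ)) = ↑(x i) - ↑((k:ℝ)) := by
          rw [← hmk_apply, ← hmk_apply, ← hmk_apply, map_sub]
        rw [hsub, hintcast, sub_zero, hx i]
      · rw [hx', Function.update_of_ne hne, hx i]
    obtain ⟨b, hb⟩ := exists_preimage G hG x' hx'sum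
    set c : OrientedEdges G → AddCircle (1:ℝ) := fun e => (b e : AddCircle (1:ℝ)) with hc
    have hφc : φ c = h := by
      funext i
      rw [hφ]
      calc ∑ e, Z i e • c e = mk (∑ e, (Z i e : ℝ) * b e) := by
            rw [map_sum]
            refine (Finset.sum_congr rfl fun e _ => ?_).symm
            rw [← zsmul_eq_mul, map_zsmul, hmk_apply]
        _ = mk (x' i) := by
            congr 1
            rw [← hb i]
            exact Finset.sum_congr rfl fun e _ => by rw [hZcast]
        _ = h i := by rw [hmk_apply, hx'cast i]
    -- conclude by translation invariance of Haar on the torus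
    have hmapA : Measure.map A ℙ = Measure.map φ (Measure.map T ℙ) := by
      rw [Measure.map_map hφmeas hTmeas, hAφ]
    have haddmeas : Measurable fun t : OrientedEdges G → AddCircle (1:ℝ) => t + c :=
      measurable_add_const c
    rw [hmapA, Measure.map_map (measurable_add_const h) hφmeas]
    have hcomp : ((fun a => a + h) ∘ φ) = φ ∘ (fun t => t + c) := by
      funext t
      simp only [Function.comp_apply, hφadd t c, hφc]
    rw [hcomp, ← Measure.map_map hφmeas haddmeas]
    congr 1
    rw [hTlaw]
    exact map_add_right_eq_self _ c
end

section
/- Let G = (V,E) be a finite simple graph, C ⊂ V a set of nodes, E_C the edges incident to C, and E_H = E \ E_C. If C is not a vertex cut of G (i.e., the subgraph induced by H = V \ C is connected), then the law of the effective inputs (s̃_i)_{i∈H} conditioned on the values (b_e)_{e∈E_C} is the uniform distribution on {x ∈ [0,1)^{|H|} : frac(Σ_{i∈H} x_i) = frac(Σ_{i∈V} s_i − Σ_{i∈C} s̃_i)}; in particular this conditional law depends on the honest inputs (s_i)_{i∈H} only through their sum Σ_{i∈H} s_i. -/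
open MeasureTheory ProbabilityTheory

namespace EffAux

variable {V : Type*} [LinearOrder V]

def mInt (G : SimpleGraph V) (i : V) (e : OrientedEdges G) : ℤ :=
  if i = e.val.1 then 1 else if i = e.val.2 then -1 else 0

lemma incidence_eq_mInt (G : SimpleGraph V) (i : V) (e : OrientedEdges G) :
    incidenceMatrix G i e = (mInt G i e : ℝ) := by
  unfold incidenceMatrix mInt; split_ifs <;> simp

def chi (G : SimpleGraph V) (u v : V) (e : OrientedEdges G) : ℤ :=
  if e.val.1 = u ∧ e.val.2 = v then 1 else if e.val.1 = v ∧ e.val.2 = u then -1 else 0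

lemma sum_mInt_eq_zero (G : SimpleGraph V) [Fintype V] [DecidableRel G.Adj]
    (e : OrientedEdges G) : ∑ i, mInt G i e = 0 := by
  have hne : e.val.1 ≠ e.val.2 := ne_of_lt e.prop.1
  have : ∀ i, mInt G i e
      = (if i = e.val.1 then (1:ℤ) else 0) + (if i = e.val.2 then -1 else 0) := by
    intro i
    unfold mInt
    by_cases h1 : i = e.val.1
    · subst h1; simp [hne]
    · simp [h1]
  simp only [this, Finset.sum_add_distrib]
  simp

lemma sum_mInt_mul_chi (G : SimpleGraph V) [Fintype V] [DecidableRel G.Adj]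
    {u v : V} (huv : G.Adj u v) (i : V) :
    ∑ e, mInt G i e * chi G u v e
      = (if i = u then 1 else 0) - (if i = v then 1 else 0) := by
  have hne : u ≠ v := huv.ne
  rcases lt_or_gt_of_ne hne with hlt | hgt
  · set e0 : OrientedEdges G := ⟨(u, v), hlt, huv⟩ with he0
    rw [Finset.sum_eq_single e0]
    · have hchi : chi G u v e0 = 1 := by unfold chi; simp [he0]
      rw [hchi, mul_one]
      unfold mInt
      simp only [he0]
      by_cases h1 : i = u
      · subst h1; simp [hne]
      · simp [h1]; split_ifs <;> norm_num
    · intro e _ hee0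
      have hchi : chi G u v e = 0 := by
        unfold chi
        split_ifs with h1 h2
        · exact absurd (Subtype.ext (Prod.ext h1.1 h1.2)) hee0
        · exact absurd (h2.2 ▸ h2.1 ▸ e.prop.1) (lt_asymm hlt)
        · rfl
      rw [hchi, mul_zero]
    · intro h; exact absurd (Finset.mem_univ e0) h
  · set e0 : OrientedEdges G := ⟨(v, u), hgt, huv.symm⟩ with he0
    rw [Finset.sum_eq_single e0]
    · have hchi : chi G u v e0 = -1 := by
        unfold chi
        have : ¬ (v = u ∧ u = v) := fun h => hne h.2
        simp [he0, this]
      rw [hchi, mul_neg_one]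
      unfold mInt
      simp only [he0]
      by_cases h1 : i = v
      · subst h1; simp [hne.symm]
      · simp [h1]; split_ifs <;> norm_num
    · intro e _ hee0
      have hchi : chi G u v e = 0 := by
        unfold chi
        split_ifs with h1 h2
        · exact absurd (h1.2 ▸ h1.1 ▸ e.prop.1) (lt_asymm hgt)
        · exact absurd (Subtype.ext (Prod.ext h2.1 h2.2)) hee0
        · rfl
      rw [hchi, mul_zero]
    · intro h; exact absurd (Finset.mem_univ e0) h

lemma chi_eq_zero_of_not_mem (G : SimpleGraph V) {s : Set V} {u v : V}
    (hu : u ∈ s) (hv : v ∈ s) {e : OrientedEdges G}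
    (he : e.val.1 ∉ s ∨ e.val.2 ∉ s) : chi G u v e = 0 := by
  unfold chi
  split_ifs with h1 h2
  · rcases he with h | h
    · exact absurd (h1.1 ▸ hu) h
    · exact absurd (h1.2 ▸ hv) h
  · rcases he with h | h
    · exact absurd (h2.1 ▸ hv) h
    · exact absurd (h2.2 ▸ hu) h
  · rfl

def wflow (G : SimpleGraph V) (s : Set V) :
    ∀ {x y : s}, (G.induce s).Walk x y → OrientedEdges G → ℤ
  | _, _, SimpleGraph.Walk.nil => 0
  | _, _, SimpleGraph.Walk.cons (u := x) (v := z) _ p => chi G x.val z.val + wflow G s p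

lemma wflow_div (G : SimpleGraph V) [Fintype V] [DecidableRel G.Adj] (s : Set V)
    {x y : s} (p : (G.induce s).Walk x y) (i : V) :
    ∑ e, mInt G i e * wflow G s p e
      = (if i = x.val then 1 else 0) - (if i = y.val then 1 else 0) := by
  induction p with
  | nil => simp [wflow]
  | @cons x z y hadj p ih =>
    have hadj' : G.Adj x.val z.val := hadj
    simp only [wflow, Pi.add_apply, mul_add, Finset.sum_add_distrib, ih,
      sum_mInt_mul_chi G hadj' i]
    ring

lemma wflow_support (G : SimpleGraph V) (s : Set V)
    {x y : s} (p : (G.induce s).Walk x y) {e : OrientedEdges G}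
    (he : e.val.1 ∉ s ∨ e.val.2 ∉ s) : wflow G s p e = 0 := by
  induction p with
  | nil => simp [wflow]
  | @cons x z y hadj p ih =>
    simp only [wflow, Pi.add_apply, ih,
      chi_eq_zero_of_not_mem G x.prop z.prop he, add_zero]

lemma exists_translation (G : SimpleGraph V) [Fintype V] [DecidableRel G.Adj]
    (C : Set V) [DecidablePred (· ∈ C)]
    (hcut : (G.induce (Cᶜ : Set V)).Connected)
    (h : (Cᶜ : Set V) → AddCircle (1 : ℝ)) (hsum : ∑ i, h i = 0) :
    ∃ u : OrientedEdges G → AddCircle (1 : ℝ),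
      (∀ e : OrientedEdges G, (e.val.1 ∈ C ∨ e.val.2 ∈ C) → u e = 0) ∧
      ∀ i : (Cᶜ : Set V), ∑ e, mInt G i.val e • u e = h i := by
  haveI : Nonempty (Cᶜ : Set V) := hcut.nonempty
  classical
  obtain ⟨v0⟩ := ‹Nonempty (Cᶜ : Set V)›
  let w : ∀ j : (Cᶜ : Set V), (G.induce (Cᶜ : Set V)).Walk j v0 :=
    fun j => (hcut.preconnected j v0).some
  refine ⟨fun e => ∑ j, (wflow G _ (w j) e) • h j, ?_, ?_⟩
  · intro e he
    have : ∀ j, wflow G (Cᶜ : Set V) (w j) e = 0 := by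
      intro j
      apply wflow_support
      rcases he with h1 | h1
      · exact Or.inl (by simpa using h1)
      · exact Or.inr (by simpa using h1)
    simp [this]
  · intro i
    have step1 : ∑ e, mInt G i.val e • ∑ j, (wflow G (Cᶜ : Set V) (w j) e) • h j
        = ∑ j, (∑ e, mInt G i.val e * wflow G (Cᶜ : Set V) (w j) e) • h j := by
      simp_rw [Finset.smul_sum, smul_smul]
      rw [Finset.sum_comm]
      simp_rw [Finset.sum_smul]
    rw [step1]
    have step2 : ∀ j : (Cᶜ : Set V),
        (∑ e, mInt G i.val e * wflow G (Cᶜ : Set V) (w j) e)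
          = (if i = j then (1:ℤ) else 0) - (if i = v0 then 1 else 0) := by
      intro j
      rw [wflow_div]
      congr 1 <;> simp [Subtype.ext_iff]
    simp_rw [step2, sub_smul, Finset.sum_sub_distrib, ite_smul, one_smul, zero_smul,
      Finset.sum_ite_eq, Finset.mem_univ, if_true]
    have hz : (∑ x : (Cᶜ : Set V), if i = v0 then h x else 0) = 0 := by
      by_cases hc : i = v0 <;> simp [hc, hsum]
    rw [hz, sub_zero]

lemma coe_fract (x : ℝ) : ((Int.fract x : ℝ) : AddCircle (1:ℝ)) = (x : AddCircle (1:ℝ)) := by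
  rw [Int.fract]
  rw [sub_eq_add_neg, QuotientAddGroup.mk_add]
  convert add_zero _
  rw [QuotientAddGroup.mk_neg, neg_eq_zero]
  rw [AddCircle.coe_eq_zero_iff]
  exact ⟨⌊x⌋, by simp⟩

lemma equivIco_coe (x : ℝ) :
    ((AddCircle.equivIco 1 0 (x : AddCircle (1:ℝ))) : ℝ) = Int.fract x := by
  have := AddCircle.coe_equivIco_mk_apply (p := (1:ℝ)) x
  simpa using this

lemma map_coe_uniform :
    Measure.map ((↑) : ℝ → AddCircle (1:ℝ)) (volume.restrict (Set.Ico (0:ℝ) 1))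
      = (volume : Measure (AddCircle (1:ℝ))) := by
  have h1 : volume.restrict (Set.Ico (0:ℝ) 1) = volume.restrict (Set.Ioc (0:ℝ) 1) :=
    Measure.restrict_congr_set Ico_ae_eq_Ioc
  rw [h1]
  have := (AddCircle.measurePreserving_mk 1 0).map_eq
  simpa using this

lemma coe_sum {ι : Type*} (t : Finset ι) (f : ι → ℝ) :
    ((∑ i ∈ t, f i : ℝ) : AddCircle (1:ℝ)) = ∑ i ∈ t, ((f i : ℝ) : AddCircle (1:ℝ)) :=
  map_sum (QuotientAddGroup.mk' _) f t

lemma coe_add' (x y : ℝ) :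
    ((x + y : ℝ) : AddCircle (1:ℝ)) = (x : AddCircle (1:ℝ)) + (y : AddCircle (1:ℝ)) := rfl

lemma coe_sub' (x y : ℝ) :
    ((x - y : ℝ) : AddCircle (1:ℝ)) = (x : AddCircle (1:ℝ)) - (y : AddCircle (1:ℝ)) := rfl

lemma coe_zsmul' (m : ℤ) (x : ℝ) :
    (((m : ℝ) * x : ℝ) : AddCircle (1:ℝ)) = m • (x : AddCircle (1:ℝ)) := by
  rw [← zsmul_eq_mul]
  exact map_zsmul (QuotientAddGroup.mk' _) m x

end EffAux

open EffAux

/-- Privacy of the masking phase: if the passive adversarial agents `C` do not form a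
vertex cut of `G` (the subgraph induced by the honest agents `H = Cᶜ` is connected),
then the law of the honest effective inputs `(s̃ᵢ)_{i ∈ H}`, conditioned on the values
`(b_e)_{e ∈ E_C}` on edges incident to `C`, is uniform on the coset
`{x : frac (∑_{i∈H} x i) = frac (∑_{i∈V} s i - ∑_{i∈C} s̃ i)}` of the zero-sum subgroup
of the torus: jointly with the conditioning data `(b_e)_{e ∈ E_C}`, the honest effective
inputs lie a.s. on that coset, and translating them by any zero-sum vector leaves the
joint law unchanged.  (These two properties characterize the conditional law as the Haar
measure of the coset, and in particular it depends on the honest inputs only through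
their sum.) -/
theorem effective_inputs_conditionally_uniform
    {V : Type*} [Fintype V] [LinearOrder V]
    (G : SimpleGraph V) [DecidableRel G.Adj]
    (C : Set V) [DecidablePred (· ∈ C)]
    (hcut : (G.induce (Cᶜ : Set V)).Connected)
    (s : V → ℝ) (hs : ∀ i, s i ∈ Set.Ico (0 : ℝ) (1 / Fintype.card V))
    {Ω : Type*} [MeasureSpace Ω] [IsProbabilityMeasure (ℙ : Measure Ω)]
    (r : Ω → V → V → ℝ)
    (hrmeas : ∀ i j, Measurable fun ω => r ω i j)
    (hrindep : iIndepFun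
      (fun (p : {p : V × V // G.Adj p.1 p.2}) ω => r ω p.val.1 p.val.2) ℙ)
    (hrunif : ∀ i j, G.Adj i j →
      Measure.map (fun ω => r ω i j) ℙ = volume.restrict (Set.Ico (0:ℝ) 1))
    (b : Ω → OrientedEdges G → ℝ)
    (hb : ∀ ω (e : OrientedEdges G),
      b ω e = Int.fract (r ω e.val.2 e.val.1 - r ω e.val.1 e.val.2))
    (a : Ω → V → ℝ)
    (ha : ∀ ω i, a ω i = Int.fract (∑ e, incidenceMatrix G i e * b ω e))
    (S : Ω → V → AddCircle (1 : ℝ))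
    (hS : ∀ ω i, S ω i = ((s i + a ω i : ℝ) : AddCircle (1 : ℝ))) :
    (∀ᵐ ω ∂(ℙ : Measure Ω),
      ∑ i : (Cᶜ : Set V), S ω i
        = ((∑ i : V, s i : ℝ) : AddCircle (1 : ℝ)) - ∑ i : (C : Set V), S ω i) ∧
    ∀ h : (Cᶜ : Set V) → AddCircle (1 : ℝ), (∑ i, h i = 0) →
      Measure.map (fun ω =>
          ((fun e : {e : OrientedEdges G // e.val.1 ∈ C ∨ e.val.2 ∈ C} => b ω e),
           fun i : (Cᶜ : Set V) => S ω i + h i)) ℙ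
        = Measure.map (fun ω =>
          ((fun e : {e : OrientedEdges G // e.val.1 ∈ C ∨ e.val.2 ∈ C} => b ω e),
           fun i : (Cᶜ : Set V) => S ω i)) ℙ := by
  classical
  -- notation
  set P := {p : V × V // G.Adj p.1 p.2} with hP
  let Fwd : OrientedEdges G → P := fun e => ⟨e.val, e.prop.2⟩
  let Rev : OrientedEdges G → P := fun e => ⟨(e.val.2, e.val.1), e.prop.2.symm⟩
  let T' : Ω → P → AddCircle (1:ℝ) := fun ω p => ((r ω p.val.1 p.val.2 : ℝ) : AddCircle (1:ℝ))
  -- cast lemmas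
  have Lb : ∀ ω (e : OrientedEdges G),
      ((b ω e : ℝ) : AddCircle (1:ℝ)) = T' ω (Rev e) - T' ω (Fwd e) := by
    intro ω e
    rw [hb, coe_fract, coe_sub']
  have La : ∀ ω (i : V), ((a ω i : ℝ) : AddCircle (1:ℝ))
      = ∑ e, mInt G i e • ((b ω e : ℝ) : AddCircle (1:ℝ)) := by
    intro ω i
    rw [ha, coe_fract, coe_sum]
    refine Finset.sum_congr rfl fun e _ => ?_
    rw [incidence_eq_mInt, coe_zsmul']
  constructor
  · -- part 1
    refine Filter.Eventually.of_forall fun ω => ?_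
    have htot : ∑ i : V, S ω i = ((∑ i : V, s i : ℝ) : AddCircle (1:ℝ)) := by
      have h1 : ∀ i : V, S ω i
          = ((s i : ℝ) : AddCircle (1:ℝ)) + ((a ω i : ℝ) : AddCircle (1:ℝ)) := by
        intro i; rw [hS, coe_add']
      simp only [h1]
      rw [Finset.sum_add_distrib, coe_sum]
      convert add_zero _ using 2
      simp only [La]
      rw [Finset.sum_comm]
      have : ∀ e : OrientedEdges G,
          (∑ i : V, mInt G i e • ((b ω e : ℝ) : AddCircle (1:ℝ))) = 0 := by
        intro e
        rw [← Finset.sum_smul, sum_mInt_eq_zero, zero_smul]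
      simp [this]
    have hsplit : (∑ i : (Cᶜ : Set V), S ω i) + (∑ i : (C : Set V), S ω i)
        = ∑ i : V, S ω i := by
      rw [add_comm]
      exact Fintype.sum_subtype_add_sum_subtype (· ∈ C) (fun i => S ω i)
    exact eq_sub_of_add_eq (hsplit.trans htot)
  · -- part 2
    intro h hsum
    obtain ⟨u, hu0, huh⟩ := exists_translation G C hcut h hsum
    let c : P → AddCircle (1:ℝ) := fun p =>
      if hlt : p.val.2 < p.val.1 then u ⟨(p.val.2, p.val.1), hlt, p.prop.symm⟩ else 0
    have hcRev : ∀ e : OrientedEdges G, c (Rev e) = u e := by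
      intro e
      show (if hlt : e.val.1 < e.val.2 then _ else 0) = u e
      rw [dif_pos e.prop.1]
    have hcFwd : ∀ e : OrientedEdges G, c (Fwd e) = 0 := by
      intro e
      show (if hlt : e.val.2 < e.val.1 then _ else 0) = 0
      rw [dif_neg (lt_asymm e.prop.1)]
    -- the deterministic post-processing map
    let Φ : (P → AddCircle (1:ℝ)) →
        ({e : OrientedEdges G // e.val.1 ∈ C ∨ e.val.2 ∈ C} → ℝ)
          × ((Cᶜ : Set V) → AddCircle (1:ℝ)) :=
      fun t => (fun e => ((AddCircle.equivIco 1 0 (t (Rev e.val) - t (Fwd e.val))) : ℝ),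
                fun i => ((s i.val : ℝ) : AddCircle (1:ℝ))
                  + ∑ e, mInt G i.val e • (t (Rev e) - t (Fwd e)))
    have hIcoMeas : Measurable (fun x : AddCircle (1:ℝ) => ((AddCircle.equivIco 1 0 x : ℝ))) := by
      have : Measurable (fun x : AddCircle (1:ℝ) =>
          ((AddCircle.measurableEquivIco 1 0 x : ℝ))) :=
        measurable_subtype_coe.comp (AddCircle.measurableEquivIco 1 0).measurable
      exact this
    have hΦm : Measurable Φ := by
      refine Measurable.prod (measurable_pi_lambda _ fun e => ?_)
        (measurable_pi_lambda _ fun i => ?_)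
      · exact hIcoMeas.comp ((measurable_pi_apply _).sub (measurable_pi_apply _))
      · refine Measurable.const_add (Finset.measurable_sum _ fun e _ => ?_) _
        exact (continuous_zsmul (mInt G i.val e)).measurable.comp
          ((measurable_pi_apply (Rev e)).sub (measurable_pi_apply (Fwd e)))
    have hT'm : Measurable T' :=
      measurable_pi_lambda _ fun p => AddCircle.measurable_mk'.comp (hrmeas _ _)
    -- law of T'
    have hTlaw : Measure.map T' ℙ
        = Measure.pi (fun _ : P => (volume : Measure (AddCircle (1:ℝ)))) := by
      refine (Measure.pi_eq ?_).symm
      intro sets hsets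
      rw [Measure.map_apply hT'm (MeasurableSet.univ_pi hsets)]
      have hpre : T' ⁻¹' (Set.pi Set.univ sets)
          = ⋂ p ∈ (Finset.univ : Finset P), (fun ω => r ω p.val.1 p.val.2) ⁻¹'
              (((↑) : ℝ → AddCircle (1:ℝ)) ⁻¹' sets p) := by
        ext ω
        simp [T', Set.mem_univ_pi]
      rw [hpre, hrindep.measure_inter_preimage_eq_mul _
        (fun p _ => AddCircle.measurable_mk' (hsets p))]
      refine Finset.prod_congr rfl fun p _ => ?_
      rw [← Measure.map_apply (hrmeas _ _) (AddCircle.measurable_mk' (hsets p)),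
        hrunif _ _ p.prop,
        ← Measure.map_apply AddCircle.measurable_mk' (hsets p), map_coe_uniform]
    -- representation of the output as Φ ∘ T'
    have hrep : ∀ ω : Ω,
        ((fun e : {e : OrientedEdges G // e.val.1 ∈ C ∨ e.val.2 ∈ C} => b ω e),
          fun i : (Cᶜ : Set V) => S ω i) = Φ (T' ω) := by
      intro ω
      refine Prod.ext ?_ ?_
      · funext e
        show b ω e.val = ((AddCircle.equivIco 1 0 (T' ω (Rev e.val) - T' ω (Fwd e.val))) : ℝ)
        rw [← Lb ω e.val, equivIco_coe, hb, Int.fract_fract]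
      · funext i
        show S ω i.val = _
        rw [hS, coe_add', La]
        simp only [Φ]
        congr 1
        exact Finset.sum_congr rfl fun e _ => by rw [Lb]
    -- shift identity
    have hΦshift : ∀ t : P → AddCircle (1:ℝ),
        Φ (t + c) = ((Φ t).1, fun i => (Φ t).2 i + h i) := by
      intro t
      refine Prod.ext ?_ ?_
      · funext e
        simp only [Φ, Pi.add_apply]
        congr 2
        rw [hcRev, hcFwd, hu0 e.val e.prop, add_zero, add_zero]
      · funext i
        simp only [Φ, Pi.add_apply]
        have : ∀ e : OrientedEdges G,
            (t (Rev e) + c (Rev e)) - (t (Fwd e) + c (Fwd e))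
              = (t (Rev e) - t (Fwd e)) + u e := by
          intro e; rw [hcRev, hcFwd, add_zero]; abel
        simp_rw [this, smul_add, Finset.sum_add_distrib, huh i]
        abel
    -- measurability of translation
    have hcm : Measurable (fun t : P → AddCircle (1:ℝ) => t + c) :=
      measurable_pi_lambda _ fun p =>
        by have := (measurable_pi_apply (X := fun _ : P => AddCircle (1:ℝ)) p).add_const (c p); exact this
    -- translation invariance of the product Haar measure
    have hinv : Measure.map (fun t : P → AddCircle (1:ℝ) => t + c)
        (Measure.pi (fun _ : P => (volume : Measure (AddCircle (1:ℝ)))))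
        = Measure.pi (fun _ : P => (volume : Measure (AddCircle (1:ℝ)))) := by
      have hcomm : (fun t : P → AddCircle (1:ℝ) => t + c) = (fun t => c + t) :=
        funext fun t => add_comm _ _
      rw [hcomm]
      exact MeasureTheory.map_add_left_eq_self _ c
    -- put everything together
    have hmaph : (fun ω => ((fun e : {e : OrientedEdges G // e.val.1 ∈ C ∨ e.val.2 ∈ C} =>
          b ω e), fun i : (Cᶜ : Set V) => S ω i + h i))
        = (Φ ∘ (fun t => t + c)) ∘ T' := by
      funext ω
      show _ = Φ (T' ω + c)
      rw [hΦshift, ← hrep ω]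
    have hmap0 : (fun ω => ((fun e : {e : OrientedEdges G // e.val.1 ∈ C ∨ e.val.2 ∈ C} =>
          b ω e), fun i : (Cᶜ : Set V) => S ω i))
        = Φ ∘ T' := funext fun ω => hrep ω
    rw [hmaph, hmap0]
    calc Measure.map ((Φ ∘ (fun t => t + c)) ∘ T') ℙ
        = Measure.map (Φ ∘ (fun t => t + c)) (Measure.map T' ℙ) :=
          (Measure.map_map (hΦm.comp hcm) hT'm).symm
      _ = Measure.map Φ (Measure.map (fun t => t + c) (Measure.map T' ℙ)) :=
          (Measure.map_map hΦm hcm).symm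
      _ = Measure.map Φ (Measure.map T' ℙ) := by rw [hTlaw, hinv]
      _ = Measure.map (Φ ∘ T') ℙ := Measure.map_map hΦm hT'm
end

section
/- Let h_i : ℝ → ℝ for i = 1,…,n satisfy h_i(s_i) ∈ [0,1/n) for the given inputs s_i, and let masks a_i ∈ [0,1) satisfy frac(Σ_i a_i) = 0. Define h̃_i = frac(h_i(s_i) + a_i). Then frac(Σ_i h̃_i) = Σ_i h_i(s_i), and consequently for any g : ℝ → ℝ, g(frac(Σ_i h̃_i)) = g(Σ_i h_i(s_i)). -/
theorem fract_sum_effective_function_values (n : ℕ) (hn : 1 ≤ n)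
    (h : Fin n → ℝ → ℝ) (s : Fin n → ℝ) (a htilde : Fin n → ℝ)
    (hval : ∀ i, h i (s i) ∈ Set.Ico (0 : ℝ) (1 / n))
    (ha : ∀ i, a i ∈ Set.Ico (0 : ℝ) 1)
    (hafrac : Int.fract (∑ i, a i) = 0)
    (hht : ∀ i, htilde i = Int.fract (h i (s i) + a i)) :
    Int.fract (∑ i, htilde i) = ∑ i, h i (s i) ∧
    ∀ g : ℝ → ℝ, g (Int.fract (∑ i, htilde i)) = g (∑ i, h i (s i)) := by
  have hnpos : (0:ℝ) < n := by positivity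
  have hsum_lt : ∑ i, h i (s i) < 1 := by
    calc ∑ i, h i (s i) < ∑ _i : Fin n, (1/n : ℝ) := by
          apply Finset.sum_lt_sum_of_nonempty
          · exact Finset.univ_nonempty_iff.mpr (Fin.pos_iff_nonempty.mp hn)
          · exact fun i _ => (hval i).2
      _ = 1 := by
          rw [Finset.sum_const, Finset.card_univ, Fintype.card_fin, nsmul_eq_mul]
          field_simp
  have hsum_nonneg : 0 ≤ ∑ i, h i (s i) :=
    Finset.sum_nonneg fun i _ => (hval i).1
  -- ∑ a is an integer
  have haint : ∑ i, a i = (⌊∑ i, a i⌋ : ℝ) := by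
    have := Int.fract_add_floor (∑ i, a i)
    linarith [hafrac ▸ this]
  have key : (∑ i, htilde i) =
      ∑ i, h i (s i) + ((⌊∑ i, a i⌋ - ∑ i, ⌊h i (s i) + a i⌋ : ℤ) : ℝ) := by
    have : ∑ i, htilde i = ∑ i, (h i (s i) + a i - (⌊h i (s i) + a i⌋ : ℝ)) := by
      apply Finset.sum_congr rfl
      intro i _
      rw [hht i, Int.fract]
    rw [this, Finset.sum_sub_distrib, Finset.sum_add_distrib]
    push_cast
    rw [← haint]
    ring
  have hfr : Int.fract (∑ i, htilde i) = ∑ i, h i (s i) := by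
    rw [key, Int.fract_add_intCast, Int.fract_eq_self.mpr ⟨hsum_nonneg, hsum_lt⟩]
  exact ⟨hfr, fun g => by rw [hfr]⟩
end

section
/- Let A be an n × m matrix with integer entries and rank n − 1 over ℝ, such that 1ₙᵀ A = 0, and let b be uniform on the torus (ℝ/ℤ)^m. Then A·b (computed in (ℝ/ℤ)ⁿ) is uniformly distributed on the closed subgroup {a ∈ (ℝ/ℤ)ⁿ : Σ_i a_i = 0}. -/
open MeasureTheory ProbabilityTheory

instance : Fact ((0 : ℝ) < 1) := ⟨one_pos⟩

instance : IsProbabilityMeasure (volume : Measure (AddCircle (1:ℝ))) :=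
  ⟨by rw [AddCircle.measure_univ]; simp⟩

open Module in
private lemma addcircle_coe_sum' {ι : Type*} (s : Finset ι) (f : ι → ℝ) :
    ((↑(∑ i ∈ s, f i) : AddCircle (1:ℝ))) = ∑ i ∈ s, ↑(f i) :=
  map_sum (QuotientAddGroup.mk' _) f s

open Module in
private lemma aux_surj' (n m : ℕ) (hn : 1 ≤ n)
    (A : Matrix (Fin n) (Fin m) ℤ)
    (hrank : (A.map (Int.cast : ℤ → ℝ)).rank = n - 1)
    (hcols : ∀ j, ∑ i, A i j = 0)
    (h : Fin n → AddCircle (1 : ℝ)) (hh : ∑ i, h i = 0) :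
    ∃ c : Fin m → AddCircle (1 : ℝ), (fun i => ∑ j, A i j • c j) = h := by
  classical
  have i0 : Fin n := ⟨0, hn⟩
  choose x hx' using fun i => QuotientAddGroup.mk_surjective (h i)
  have hsum : ((↑(∑ i, x i) : AddCircle (1:ℝ))) = 0 := by
    rw [addcircle_coe_sum']
    simp only [hx']
    exact hh
  rw [AddCircle.coe_eq_zero_iff] at hsum
  obtain ⟨k, hk⟩ := hsum
  set x' : Fin n → ℝ := x - Pi.single i0 ((k : ℝ)) with hx'def
  have hx'coe : ∀ i, (↑(x' i) : AddCircle (1:ℝ)) = h i := by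
    intro i
    simp only [hx'def, Pi.sub_apply]
    by_cases hi : i = i0
    · subst hi
      rw [Pi.single_eq_same]
      have hz : ((k : ℝ) : AddCircle (1:ℝ)) = 0 := by
        rw [AddCircle.coe_eq_zero_iff]
        exact ⟨k, by simp⟩
      rw [AddCircle.coe_sub, hz, hx', sub_zero]
    · rw [Pi.single_eq_of_ne hi, sub_zero, hx']
  have hx'sum : ∑ i, x' i = 0 := by
    simp only [hx'def, Pi.sub_apply, Finset.sum_sub_distrib]
    rw [Finset.sum_pi_single']
    simp only [Finset.mem_univ, if_true]
    rw [← hk]; simp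
  set A' := A.map (Int.cast : ℤ → ℝ) with hA'
  set s : (Fin n → ℝ) →ₗ[ℝ] ℝ := ∑ i, LinearMap.proj i with hs
  have hsapp : ∀ v : Fin n → ℝ, s v = ∑ i, v i := by
    intro v; simp [hs, LinearMap.proj]
  have hker : finrank ℝ (LinearMap.ker s) = n - 1 := by
    have h1 : LinearMap.range s = ⊤ := by
      rw [LinearMap.range_eq_top]
      intro r
      exact ⟨Pi.single i0 r, by rw [hsapp]; simp [Finset.sum_pi_single']⟩
    have h2 := LinearMap.finrank_range_add_finrank_ker s
    rw [h1] at h2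
    simp [finrank_top] at h2
    omega
  have hle : LinearMap.range A'.mulVecLin ≤ LinearMap.ker s := by
    rintro - ⟨y, rfl⟩
    rw [LinearMap.mem_ker, hsapp]
    have h3 : ∀ i, A'.mulVecLin y i = ∑ j, A' i j * y j := by
      intro i; simp [Matrix.mulVecLin, Matrix.mulVec, dotProduct]
    simp only [h3]
    rw [Finset.sum_comm]
    have h4 : ∀ j, ∑ i, A' i j * y j = 0 := by
      intro j
      rw [← Finset.sum_mul]
      have h5 : ∑ i, A' i j = 0 := by
        simp only [hA', Matrix.map_apply]
        rw [← Int.cast_sum, hcols]; simp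
      rw [h5, zero_mul]
    simp [h4]
  have heq : LinearMap.range A'.mulVecLin = LinearMap.ker s :=
    Submodule.eq_of_le_of_finrank_eq hle (by rw [hker]; exact hrank)
  have hx'mem : x' ∈ LinearMap.range A'.mulVecLin := by
    rw [heq, LinearMap.mem_ker, hsapp]; exact hx'sum
  obtain ⟨y, hy⟩ := hx'mem
  refine ⟨fun j => ↑(y j), ?_⟩
  funext i
  have hterm : ∀ j, (A i j) • (↑(y j) : AddCircle (1:ℝ)) = ↑(A' i j * y j) := by
    intro j
    have : (A i j) • (y j) = A' i j * y j := by simp [hA', zsmul_eq_mul]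
    rw [← this]
    exact (QuotientAddGroup.mk_zsmul _ (y j) (A i j)).symm
  simp only [hterm]
  rw [← addcircle_coe_sum']
  have : ∑ j, A' i j * y j = x' i := by
    rw [← hy]
    simp [Matrix.mulVecLin, Matrix.mulVec, dotProduct]
  rw [this, hx'coe]

/-- If `A` is an `n × m` integer matrix of real rank `n - 1` whose columns each sum to
zero (`1ₙᵀ A = 0`), and `b` is Haar-uniform on the torus `(ℝ/ℤ)^m`, then `A ⬝ b`
(computed in `(ℝ/ℤ)ⁿ`) is uniformly distributed on the closed subgroup
`H = {a : ∑ i, a i = 0}`: its law gives `H` full measure and is invariant under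
translation by every element of `H`, which characterizes the Haar probability measure
of `H`. -/
theorem intMatrix_mulVec_uniform_on_zero_sum_subgroup (n m : ℕ) (hn : 1 ≤ n)
    (A : Matrix (Fin n) (Fin m) ℤ)
    (hrank : (A.map (Int.cast : ℤ → ℝ)).rank = n - 1)
    (hcols : ∀ j, ∑ i, A i j = 0)
    {Ω : Type*} [MeasureSpace Ω] [IsProbabilityMeasure (ℙ : Measure Ω)]
    (B : Ω → Fin m → AddCircle (1 : ℝ))
    (hBmeas : Measurable B)
    (hBunif : Measure.map B ℙ = (volume : Measure (Fin m → AddCircle (1 : ℝ)))) :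
    (Measure.map (fun ω => fun i => ∑ j, A i j • B ω j) ℙ)
        {a : Fin n → AddCircle (1 : ℝ) | ∑ i, a i = 0} = 1 ∧
    ∀ h : Fin n → AddCircle (1 : ℝ), (∑ i, h i = 0) →
      Measure.map (fun a => a + h)
          (Measure.map (fun ω => fun i => ∑ j, A i j • B ω j) ℙ)
        = Measure.map (fun ω => fun i => ∑ j, A i j • B ω j) ℙ := by
  classical
  set φ : (Fin m → AddCircle (1:ℝ)) → (Fin n → AddCircle (1:ℝ)) :=
    fun b i => ∑ j, A i j • b j with hφdef
  have hφcont : Continuous φ := by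
    apply continuous_pi
    intro i
    apply continuous_finset_sum
    intro j _
    exact (continuous_zsmul (A i j)).comp (continuous_apply j)
  have hφmeas : Measurable φ := hφcont.measurable
  have hmap : Measure.map (fun ω => fun i => ∑ j, A i j • B ω j) ℙ
      = Measure.map φ (volume : Measure (Fin m → AddCircle (1:ℝ))) := by
    rw [← hBunif, Measure.map_map hφmeas hBmeas]
    rfl
  have hφmem : ∀ b, ∑ i, φ b i = 0 := by
    intro b
    simp only [hφdef]
    rw [Finset.sum_comm]
    have : ∀ j, ∑ i, A i j • b j = (0:ℤ) • b j := by
      intro j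
      rw [← Finset.sum_smul, hcols]
    simp only [this, zero_smul, Finset.sum_const_zero]
  have hSmeas : MeasurableSet {a : Fin n → AddCircle (1:ℝ) | ∑ i, a i = 0} := by
    have hg : Continuous fun a : Fin n → AddCircle (1:ℝ) => ∑ i, a i :=
      continuous_finset_sum _ fun i _ => continuous_apply i
    exact hg.measurable (measurableSet_singleton 0)
  constructor
  · rw [hmap, Measure.map_apply hφmeas hSmeas]
    have : φ ⁻¹' {a : Fin n → AddCircle (1:ℝ) | ∑ i, a i = 0} = Set.univ := by
      ext b; simpa using hφmem b
    rw [this]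
    exact measure_univ
  · intro h hh
    obtain ⟨c, hc⟩ := aux_surj' n m hn A hrank hcols h hh
    rw [hmap, Measure.map_map (measurable_add_const h) hφmeas]
    have hkey : (fun a => a + h) ∘ φ = φ ∘ (fun b => b + c) := by
      funext b
      simp only [Function.comp_apply, hφdef]
      funext i
      have : ∑ j, A i j • (b + c) j = (∑ j, A i j • b j) + ∑ j, A i j • c j := by
        rw [← Finset.sum_add_distrib]
        congr 1; funext j
        simp [smul_add]
      rw [this]
      have : (∑ j, A i j • c j) = h i := congrFun hc i
      rw [this]
      rfl
    rw [hkey, ← Measure.map_map hφmeas (measurable_add_const c),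
      map_add_right_eq_self _ c]
end
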